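/- Let G be a connected finite simple graph. Then every sign function π on G with ρ(G_π) < ρ(G) satisfies ρ(G_π) < max_{e ∈ E} ρ(G−e). Consequently, if the set Γ(G) of signed graphs on G whose spectral radius is less than ρ(G) is nonempty, then ρ_Γ(G) := max{ρ(G_π) : ρ(G_π) < ρ(G)} < max_{e ∈ E} ρ(G−e). -/

import Mathlib

open Matrix Finset
open scoped Classical

noncomputable section

/-- `μ` is an eigenvalue of the real matrix `A`. -/
def IsEigenval {n : Type*} [Fintype n] (A : Matrix n n ℝ) (μ : ℝ) : Prop :=
  ∃ x : n → ℝ, x ≠ 0 ∧ A.mulVec x = μ • x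

/-- The spectral radius of a real symmetric matrix:
the largest modulus of an eigenvalue. -/
def specRad {n : Type*} [Fintype n] (A : Matrix n n ℝ) : ℝ :=
  sSup {r : ℝ | ∃ μ : ℝ, IsEigenval A μ ∧ r = |μ|}

/-- The spectral radius of a finite simple graph. -/
def grho {V : Type*} [Fintype V] [DecidableEq V] (G : SimpleGraph V) : ℝ :=
  letI := Classical.decRel G.Adj
  specRad (G.adjMatrix ℝ)

/-- max over edges of spectral radius of the edge-deleted graph -/
def rhoE {V : Type*} [Fintype V] [DecidableEq V] (G : SimpleGraph V) : ℝ :=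
  sSup {r : ℝ | ∃ e ∈ G.edgeSet, r = grho (G.deleteEdges {e})}

/-- Eigenpair of the k-power hypergraph G^(k). -/
def IsPowerEigenpair {V : Type*} [Fintype V] [DecidableEq V] (G : SimpleGraph V) (k : ℕ)
    (lam : ℂ) (x : (V ⊕ (G.edgeSet × Fin (k - 2))) → ℂ) : Prop :=
  x ≠ 0 ∧
    (∀ i : V, lam * x (Sum.inl i) ^ (k - 1) =
      ∑ j : V, if h : G.Adj i j then
        x (Sum.inl j) * ∏ t : Fin (k - 2), x (Sum.inr (⟨s(i, j), (G.mem_edgeSet).mpr h⟩, t))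
      else 0) ∧
    ∀ (i j : V) (h : G.Adj i j) (t : Fin (k - 2)),
      lam * x (Sum.inr (⟨s(i, j), (G.mem_edgeSet).mpr h⟩, t)) ^ (k - 1) =
        x (Sum.inl i) * x (Sum.inl j) *
          ∏ u ∈ Finset.univ.erase t, x (Sum.inr (⟨s(i, j), (G.mem_edgeSet).mpr h⟩, u))

/-- λ is an eigenvalue of G^(k). -/
def IsPowerEigenvalue {V : Type*} [Fintype V] [DecidableEq V] (G : SimpleGraph V) (k : ℕ)
    (lam : ℂ) : Prop :=
  ∃ x, IsPowerEigenpair G k lam x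

/-- The adjacency matrix of a signed graph, sign function `π : G.edgeSet → ℤˣ`. -/
def signedAdj {V : Type*} [Fintype V] [DecidableEq V] (G : SimpleGraph V)
    (π : G.edgeSet → ℤˣ) : Matrix V V ℝ :=
  Matrix.of fun i j => if h : G.Adj i j then ((π ⟨s(i, j), (G.mem_edgeSet).mpr h⟩ : ℤ) : ℝ) else 0

/-- Switching-equivalence of matrices. -/
def SwitchEquiv {V : Type*} [Fintype V] [DecidableEq V] (A B : Matrix V V ℝ) : Prop :=
  ∃ d : V → ℝ, (∀ i, d i = 1 ∨ d i = -1) ∧ B = Matrix.diagonal d * A * Matrix.diagonal d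

/-- A signed graph is balanced if it is switching equivalent to the all-`+1` signing. -/
def IsBalanced {V : Type*} [Fintype V] [DecidableEq V] (G : SimpleGraph V)
    (π : G.edgeSet → ℤˣ) : Prop :=
  SwitchEquiv (signedAdj G π) (signedAdj G fun _ => 1)

def IsBipartite {V : Type*} (G : SimpleGraph V) : Prop :=
  ∃ c : V → Bool, ∀ ⦃i j⦄, G.Adj i j → c i ≠ c j

end


/-! ### Auxiliary spectral lemmas -/

noncomputable section

namespace SpecTool

open Matrix Finset

variable {n : Type*} [Fintype n] [DecidableEq n] {A : Matrix n n ℝ}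

lemma isEigenval_eigenvalues (hA : A.IsHermitian) (i : n) :
    IsEigenval A (hA.eigenvalues i) := by
  refine ⟨⇑(hA.eigenvectorBasis i), ?_, hA.mulVec_eigenvectorBasis i⟩
  intro h
  apply hA.eigenvectorBasis.orthonormal.ne_zero i
  ext j; exact congrFun h j

lemma eigen_exists_index (hA : A.IsHermitian) {μ : ℝ} (h : IsEigenval A μ) :
    ∃ i, μ = hA.eigenvalues i := by
  obtain ⟨x, hx, hAx⟩ := h
  set U : Matrix n n ℝ := ↑(hA.eigenvectorUnitary) with hU
  have hUU : U * star U = 1 := (Matrix.mem_unitaryGroup_iff).mp hA.eigenvectorUnitary.2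
  have hUU' : star U * U = 1 := (Matrix.mem_unitaryGroup_iff').mp hA.eigenvectorUnitary.2
  have hspec : A = U * diagonal hA.eigenvalues * star U := by
    have := hA.spectral_theorem
    simpa using this
  set z : n → ℝ := star U *ᵥ x with hz
  have hz0 : z ≠ 0 := by
    intro h0
    apply hx
    have : U *ᵥ z = x := by
      rw [hz, mulVec_mulVec, hUU, one_mulVec]
    rw [h0, mulVec_zero] at this
    exact this.symm
  have hDz : diagonal hA.eigenvalues *ᵥ z = μ • z := by
    have : star U *ᵥ (A *ᵥ x) = star U *ᵥ (μ • x) := by rw [hAx]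
    rw [mulVec_smul] at this
    calc diagonal hA.eigenvalues *ᵥ z
        = (diagonal hA.eigenvalues * star U) *ᵥ x := by rw [hz, mulVec_mulVec]
      _ = (star U * A) *ᵥ x := by
          have : star U * A = diagonal hA.eigenvalues * star U := by
            conv_lhs => rw [hspec, ← mul_assoc, ← mul_assoc, hUU', one_mul]
          rw [this]
      _ = star U *ᵥ (A *ᵥ x) := by rw [mulVec_mulVec]
      _ = μ • z := this
  obtain ⟨j, hj⟩ := Function.ne_iff.mp hz0
  refine ⟨j, ?_⟩
  have := congrFun hDz j
  simp [mulVec_diagonal] at this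
  rcases this with h | h
  · exact h.symm
  · exact absurd h hj

lemma eigenSet_eq (hA : A.IsHermitian) :
    {r : ℝ | ∃ μ, IsEigenval A μ ∧ r = |μ|} = Set.range (fun i => |hA.eigenvalues i|) := by
  ext r
  constructor
  · rintro ⟨μ, hμ, rfl⟩
    obtain ⟨i, rfl⟩ := eigen_exists_index hA hμ
    exact ⟨i, rfl⟩
  · rintro ⟨i, rfl⟩
    exact ⟨_, isEigenval_eigenvalues hA i, rfl⟩

lemma specRad_attained [Nonempty n] (hA : A.IsHermitian) :
    ∃ i, specRad A = |hA.eigenvalues i| := by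
  have h := eigenSet_eq hA
  have hne : (Set.range (fun i => |hA.eigenvalues i|)).Nonempty := Set.range_nonempty _
  have hfin : (Set.range (fun i => |hA.eigenvalues i|)).Finite := Set.finite_range _
  obtain ⟨i, hi⟩ := hne.csSup_mem hfin
  rw [specRad, h]
  exact ⟨i, hi.symm⟩

lemma abs_eigenvalues_le [Nonempty n] (hA : A.IsHermitian) (i : n) :
    |hA.eigenvalues i| ≤ specRad A := by
  rw [specRad, eigenSet_eq hA]
  exact le_csSup (Set.Finite.bddAbove (Set.finite_range _)) ⟨i, rfl⟩

lemma abs_le_specRad [Nonempty n] (hA : A.IsHermitian) {μ : ℝ} (h : IsEigenval A μ) :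
    |μ| ≤ specRad A := by
  obtain ⟨i, rfl⟩ := eigen_exists_index hA h
  exact abs_eigenvalues_le hA i

lemma exists_eigen_specRad [Nonempty n] (hA : A.IsHermitian) :
    ∃ (μ : ℝ) (x : n → ℝ), x ≠ 0 ∧ A *ᵥ x = μ • x ∧ specRad A = |μ| := by
  obtain ⟨i, hi⟩ := specRad_attained hA
  obtain ⟨x, hx, hAx⟩ := isEigenval_eigenvalues hA i
  exact ⟨_, x, hx, hAx, hi⟩

lemma rayleigh_le [Nonempty n] (hA : A.IsHermitian) (y : n → ℝ) :
    y ⬝ᵥ (A *ᵥ y) ≤ specRad A * (y ⬝ᵥ y) := by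
  set U : Matrix n n ℝ := ↑(hA.eigenvectorUnitary) with hU
  have hUU : U * star U = 1 := (Matrix.mem_unitaryGroup_iff).mp hA.eigenvectorUnitary.2
  have hUU' : star U * U = 1 := (Matrix.mem_unitaryGroup_iff').mp hA.eigenvectorUnitary.2
  have hspec : A = U * diagonal hA.eigenvalues * star U := by
    have := hA.spectral_theorem
    simpa using this
  set z : n → ℝ := star U *ᵥ y with hz
  have hsU : star U = Uᵀ := by
    ext i j; simp [Matrix.star_apply]
  have key1 : y ⬝ᵥ (A *ᵥ y) = z ⬝ᵥ (diagonal hA.eigenvalues *ᵥ z) := by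
    have hAy : A *ᵥ y = U *ᵥ (diagonal hA.eigenvalues *ᵥ z) := by
      conv_lhs => rw [hspec]
      rw [hz, mulVec_mulVec, mulVec_mulVec, mul_assoc]
    rw [hAy, dotProduct_mulVec y U, hz, hsU, mulVec_transpose]
  have key2 : y ⬝ᵥ y = z ⬝ᵥ z := by
    rw [hz, hsU]
    rw [dotProduct_mulVec, vecMul_transpose, mulVec_mulVec, ← hsU, hUU, one_mulVec]
  have key3 : z ⬝ᵥ (diagonal hA.eigenvalues *ᵥ z) ≤ specRad A * (z ⬝ᵥ z) := by
    rw [dotProduct, dotProduct, Finset.mul_sum]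
    apply Finset.sum_le_sum
    intro i _
    rw [mulVec_diagonal]
    have h1 := abs_eigenvalues_le hA i
    have h2 := abs_le.mp h1
    nlinarith [sq_nonneg (z i), h2.1, h2.2]
  rw [key1, key2]
  exact key3

lemma mulVec_apply' (A : Matrix n n ℝ) (x : n → ℝ) (i : n) :
    (A *ᵥ x) i = ∑ j, A i j * x j := by
  simp [Matrix.mulVec, dotProduct]

lemma specRad_le_of_pos_eigenvector [Nonempty n] (hA : A.IsHermitian)
    (hnn : ∀ i j, 0 ≤ A i j) {p : n → ℝ} (hp : ∀ i, 0 < p i) {r : ℝ}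
    (hAp : A *ᵥ p = r • p) : specRad A ≤ r := by
  obtain ⟨μ, x, hx0, hAx, hspecr⟩ := exists_eigen_specRad hA
  rw [hspecr]
  obtain ⟨i, -, hi⟩ := Finset.exists_max_image Finset.univ (fun i => |x i| / p i)
    ⟨Classical.arbitrary n, Finset.mem_univ _⟩
  set c := |x i| / p i with hc
  have hbound : ∀ j, |x j| ≤ c * p j := by
    intro j
    have h := hi j (Finset.mem_univ j)
    rw [div_le_iff₀ (hp j)] at h
    linarith [h]
  have hxi : |x i| = c * p i := by
    rw [hc, div_mul_cancel₀]
    exact (hp i).ne'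
  have hc0 : 0 < c := by
    obtain ⟨j, hj⟩ := Function.ne_iff.mp hx0
    have h1 : 0 < |x j| := abs_pos.mpr hj
    have h2 := hbound j
    nlinarith [hp j]
  have hApi : ∑ j, A i j * p j = r * p i := by
    have := congrFun hAp i
    rw [mulVec_apply'] at this
    simpa using this
  have h1 : (A *ᵥ x) i = μ * x i := by rw [hAx]; simp
  have h2 : |μ| * |x i| ≤ ∑ j, A i j * |x j| := by
    rw [← abs_mul, ← h1, mulVec_apply']
    refine (Finset.abs_sum_le_sum_abs _ _).trans ?_
    apply Finset.sum_le_sum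
    intro j _
    rw [abs_mul, abs_of_nonneg (hnn i j)]
  have h3 : ∑ j, A i j * |x j| ≤ ∑ j, A i j * (c * p j) := by
    apply Finset.sum_le_sum
    intro j _
    exact mul_le_mul_of_nonneg_left (hbound j) (hnn i j)
  have h4 : ∑ j, A i j * (c * p j) = c * (r * p i) := by
    rw [← hApi, Finset.mul_sum]
    apply Finset.sum_congr rfl
    intro j _; ring
  have key : |μ| * (c * p i) ≤ c * (r * p i) := by
    rw [← hxi]
    exact h2.trans (h3.trans h4.le)
  nlinarith [mul_pos hc0 (hp i), key]

end SpecTool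

/-! ### Auxiliary graph lemmas -/

section GraphAux

open Matrix Finset

variable {V : Type*} [Fintype V] [DecidableEq V]

lemma isHermitian_of_symm' {A : Matrix V V ℝ} (h : ∀ i j, A i j = A j i) : A.IsHermitian := by
  ext i j
  rw [Matrix.conjTranspose_apply, star_trivial]
  exact h j i

lemma adjMatrix_irrel (G : SimpleGraph V) (i1 i2 : DecidableRel G.Adj) :
    @SimpleGraph.adjMatrix ℝ V G i1 _ _ = @SimpleGraph.adjMatrix ℝ V G i2 _ _ := by
  funext i j
  by_cases h : G.Adj i j <;> simp [SimpleGraph.adjMatrix, h]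

lemma grho_eq (G : SimpleGraph V) [inst : DecidableRel G.Adj] :
    grho G = specRad (G.adjMatrix ℝ) := by
  unfold grho
  congr 1
  exact adjMatrix_irrel G _ _

lemma adjMatrix_herm (G : SimpleGraph V) [DecidableRel G.Adj] :
    (G.adjMatrix ℝ).IsHermitian := by
  apply isHermitian_of_symm'
  intro i j
  by_cases h : G.Adj i j
  · simp [SimpleGraph.adjMatrix_apply, h, h.symm]
  · have h2 : ¬ G.Adj j i := fun hh => h hh.symm
    simp [SimpleGraph.adjMatrix_apply, h, h2]

lemma adjMatrix_nonneg (G : SimpleGraph V) [DecidableRel G.Adj] (i j : V) :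
    0 ≤ G.adjMatrix ℝ i j := by
  rw [SimpleGraph.adjMatrix_apply]
  split_ifs <;> norm_num

lemma signedAdj_apply' (G : SimpleGraph V) (π : G.edgeSet → ℤˣ) {i j : V} (h : G.Adj i j) :
    signedAdj G π i j = ((π ⟨s(i, j), (G.mem_edgeSet).mpr h⟩ : ℤ) : ℝ) := by
  simp [signedAdj, h]

lemma signedAdj_apply_ne (G : SimpleGraph V) (π : G.edgeSet → ℤˣ) {i j : V} (h : ¬ G.Adj i j) :
    signedAdj G π i j = 0 := by
  simp [signedAdj, h]

lemma signedAdj_symm (G : SimpleGraph V) (π : G.edgeSet → ℤˣ) (i j : V) :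
    signedAdj G π i j = signedAdj G π j i := by
  by_cases h : G.Adj i j
  · rw [signedAdj_apply' G π h, signedAdj_apply' G π h.symm]
    have he : (⟨s(i, j), (G.mem_edgeSet).mpr h⟩ : G.edgeSet) =
        ⟨s(j, i), (G.mem_edgeSet).mpr h.symm⟩ := Subtype.ext Sym2.eq_swap
    rw [he]
  · rw [signedAdj_apply_ne G π h, signedAdj_apply_ne G π (fun hh => h hh.symm)]

lemma signedAdj_pm (G : SimpleGraph V) (π : G.edgeSet → ℤˣ) {i j : V} (h : G.Adj i j) :
    signedAdj G π i j = 1 ∨ signedAdj G π i j = -1 := by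
  rw [signedAdj_apply' G π h]
  rcases Int.units_eq_one_or (π ⟨s(i, j), (G.mem_edgeSet).mpr h⟩) with h1 | h1 <;>
    rw [h1] <;> norm_num

lemma exists_boundary {G : SimpleGraph V} {S : Set V} {a b : V} (w : G.Walk b a) :
    b ∉ S → a ∈ S → ∃ u v, u ∉ S ∧ v ∈ S ∧ G.Adj u v := by
  induction w with
  | nil => intro hb ha; exact absurd ha hb
  | @cons u v c h p ih =>
    intro hb ha
    by_cases hv : v ∈ S
    · exact ⟨u, v, hb, hv, h⟩
    · exact ih hv ha

end GraphAux

end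


section MainStep

open Matrix Finset

variable {V : Type*} [Fintype V] [DecidableEq V]

set_option maxHeartbeats 1000000 in
lemma main_step (G : SimpleGraph V) (hG : G.Connected) (π : G.edgeSet → ℤˣ)
    (hlt : specRad (signedAdj G π) < grho G) :
    ∃ e ∈ G.edgeSet, specRad (signedAdj G π) < grho (G.deleteEdges {e}) := by
  haveI : Nonempty V := hG.nonempty
  have hApH : (signedAdj G π).IsHermitian := isHermitian_of_symm' (signedAdj_symm G π)
  obtain ⟨μ, x, hx0, hAx, hrμ⟩ := SpecTool.exists_eigen_specRad hApH
  set r := specRad (signedAdj G π) with hrdef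
  have hr0 : 0 ≤ r := by rw [hrμ]; exact abs_nonneg μ
  set d : V → ℝ := fun i => if x i < 0 then -1 else 1 with hd
  set sg : ℝ := if μ < 0 then -1 else 1 with hsg
  have hdx : ∀ i, d i * x i = |x i| := by
    intro i; rw [hd]; dsimp only; split_ifs with h
    · rw [abs_of_neg h]; ring
    · rw [abs_of_nonneg (not_lt.mp h)]; ring
  have hdabs : ∀ i, d i * |x i| = x i := by
    intro i; rw [hd]; dsimp only; split_ifs with h
    · rw [abs_of_neg h]; ring
    · rw [abs_of_nonneg (not_lt.mp h)]; ring
  have hsμ : sg * μ = r := by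
    rw [hrμ, hsg]; split_ifs with h
    · rw [abs_of_neg h]; ring
    · rw [abs_of_nonneg (not_lt.mp h)]; ring
  have hdpm : ∀ i, d i = 1 ∨ d i = -1 := by
    intro i; rw [hd]; dsimp only; split_ifs <;> simp
  have hspm : sg = 1 ∨ sg = -1 := by rw [hsg]; split_ifs <;> simp
  set B : Matrix V V ℝ := Matrix.of (fun i j => sg * d i * d j * signedAdj G π i j) with hB
  set p : V → ℝ := fun i => |x i| with hp
  have hppt : ∀ i, p i = |x i| := fun i => rfl
  have hpnn : ∀ i, 0 ≤ p i := fun i => abs_nonneg _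
  have hBsymm : ∀ i j, B i j = B j i := by
    intro i j
    simp only [hB, Matrix.of_apply]
    rw [signedAdj_symm G π i j]; ring
  have hBp : B *ᵥ p = r • p := by
    funext i
    rw [SpecTool.mulVec_apply']
    have hxi : (signedAdj G π *ᵥ x) i = μ * x i := by rw [hAx]; simp
    rw [SpecTool.mulVec_apply'] at hxi
    have step1 : ∀ j, B i j * p j = (sg * d i) * (signedAdj G π i j * (d j * |x j|)) := by
      intro j; simp only [hB, Matrix.of_apply, hp]; ring
    calc ∑ j, B i j * p j
        = ∑ j, (sg * d i) * (signedAdj G π i j * (d j * |x j|)) :=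
          Finset.sum_congr rfl (fun j _ => step1 j)
      _ = (sg * d i) * ∑ j, signedAdj G π i j * (d j * |x j|) := by rw [Finset.mul_sum]
      _ = (sg * d i) * ∑ j, signedAdj G π i j * x j := by
          congr 1; exact Finset.sum_congr rfl (fun j _ => by rw [hdabs j])
      _ = (sg * d i) * (μ * x i) := by rw [hxi]
      _ = (sg * μ) * (d i * x i) := by ring
      _ = r * p i := by rw [hsμ, hdx i, hppt]
      _ = (r • p) i := by simp
  have hBedge : ∀ i j, G.Adj i j → B i j = 1 ∨ B i j = -1 := by
    intro i j h
    simp only [hB, Matrix.of_apply]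
    rcases hspm with h1 | h1 <;> rcases hdpm i with h2 | h2 <;> rcases hdpm j with h3 | h3 <;>
      rcases signedAdj_pm G π h with h4 | h4 <;> rw [h1, h2, h3, h4] <;> norm_num
  have hBzero : ∀ i j, ¬ G.Adj i j → B i j = 0 := by
    intro i j h
    simp only [hB, Matrix.of_apply, signedAdj_apply_ne G π h, mul_zero]
  have hN : 0 < p ⬝ᵥ p := by
    obtain ⟨k, hk⟩ := Function.ne_iff.mp hx0
    rw [dotProduct]
    refine Finset.sum_pos' (fun i _ => mul_nonneg (hpnn i) (hpnn i)) ⟨k, Finset.mem_univ k, ?_⟩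
    have hpk : 0 < p k := abs_pos.mpr hk
    nlinarith
  have hpBp : p ⬝ᵥ (B *ᵥ p) = r * (p ⬝ᵥ p) := by
    rw [hBp, dotProduct_smul, smul_eq_mul]
  have expand : ∀ (M : Matrix V V ℝ) (q : V → ℝ),
      q ⬝ᵥ (M *ᵥ q) = ∑ a, ∑ b, M a b * (q a * q b) := by
    intro M q
    rw [dotProduct]
    refine Finset.sum_congr rfl (fun a _ => ?_)
    rw [SpecTool.mulVec_apply', Finset.mul_sum]
    exact Finset.sum_congr rfl (fun b _ => by ring)
  have hQuad : ∀ u0 v0 : V, G.Adj u0 v0 → B u0 v0 = -1 →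
      r * (p ⬝ᵥ p) + 2 * (p u0 * p v0) ≤
        p ⬝ᵥ (((G.deleteEdges {s(u0, v0)}).adjMatrix ℝ) *ᵥ p) := by
    intro u0 v0 hadj hBneg
    set A' : Matrix V V ℝ := (G.deleteEdges {s(u0, v0)}).adjMatrix ℝ with hA'
    have hEnt : ∀ a b, 0 ≤ (A' a b - B a b) * (p a * p b) := by
      intro a b
      refine mul_nonneg ?_ (mul_nonneg (hpnn a) (hpnn b))
      by_cases h : G.Adj a b
      · by_cases h2 : s(a, b) = s(u0, v0)
        · have hA0 : A' a b = 0 := by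
            simp [hA', SimpleGraph.deleteEdges_adj, h2]
          have hBab : B a b = -1 := by
            rcases Sym2.eq_iff.mp h2 with ⟨rfl, rfl⟩ | ⟨rfl, rfl⟩
            · exact hBneg
            · rw [hBsymm]; exact hBneg
          rw [hA0, hBab]; norm_num
        · have hA1 : A' a b = 1 := by
            simp [hA', SimpleGraph.deleteEdges_adj, h, h2]
          rcases hBedge a b h with h3 | h3 <;> rw [hA1, h3] <;> norm_num
      · have hA0 : A' a b = 0 := by
          simp [hA', SimpleGraph.deleteEdges_adj, h]
        rw [hA0, hBzero a b h]; norm_num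
    have hdiff : p ⬝ᵥ (A' *ᵥ p) - p ⬝ᵥ (B *ᵥ p)
        = ∑ a, ∑ b, (A' a b - B a b) * (p a * p b) := by
      rw [expand A' p, expand B p, ← Finset.sum_sub_distrib]
      refine Finset.sum_congr rfl (fun a _ => ?_)
      rw [← Finset.sum_sub_distrib]
      exact Finset.sum_congr rfl (fun b _ => by ring)
    have hinner_nonneg : ∀ a, (0:ℝ) ≤ ∑ b, (A' a b - B a b) * (p a * p b) :=
      fun a => Finset.sum_nonneg (fun b _ => hEnt a b)
    have hne : u0 ≠ v0 := hadj.ne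
    have hA'uv : A' u0 v0 = 0 := by
      simp [hA', SimpleGraph.deleteEdges_adj]
    have hA'vu : A' v0 u0 = 0 := by
      simp [hA', SimpleGraph.deleteEdges_adj, Sym2.eq_swap]
    have h1 : p u0 * p v0 ≤ ∑ b, (A' u0 b - B u0 b) * (p u0 * p b) := by
      have hs := Finset.single_le_sum (f := fun b => (A' u0 b - B u0 b) * (p u0 * p b))
        (fun b _ => hEnt u0 b) (Finset.mem_univ v0)
      have he : (A' u0 v0 - B u0 v0) * (p u0 * p v0) = p u0 * p v0 := by
        rw [hA'uv, hBneg]; ring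
      have hs' : (A' u0 v0 - B u0 v0) * (p u0 * p v0)
          ≤ ∑ b, (A' u0 b - B u0 b) * (p u0 * p b) := hs
      linarith
    have h2 : p v0 * p u0 ≤ ∑ b, (A' v0 b - B v0 b) * (p v0 * p b) := by
      have hs := Finset.single_le_sum (f := fun b => (A' v0 b - B v0 b) * (p v0 * p b))
        (fun b _ => hEnt v0 b) (Finset.mem_univ u0)
      have hBvu : B v0 u0 = -1 := by rw [hBsymm v0 u0]; exact hBneg
      have he : (A' v0 u0 - B v0 u0) * (p v0 * p u0) = p v0 * p u0 := by
        rw [hA'vu, hBvu]; ring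
      have hs' : (A' v0 u0 - B v0 u0) * (p v0 * p u0)
          ≤ ∑ b, (A' v0 b - B v0 b) * (p v0 * p b) := hs
      linarith
    have h3 : (∑ a ∈ ({u0, v0} : Finset V), ∑ b, (A' a b - B a b) * (p a * p b))
        ≤ ∑ a, ∑ b, (A' a b - B a b) * (p a * p b) :=
      Finset.sum_le_sum_of_subset_of_nonneg (Finset.subset_univ _)
        (fun a _ _ => hinner_nonneg a)
    rw [Finset.sum_pair hne] at h3
    have hcomm : p v0 * p u0 = p u0 * p v0 := mul_comm _ _
    linarith [h1, h2, h3, hdiff, hpBp]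
  by_cases hcase : ∃ a b, G.Adj a b ∧ B a b = -1 ∧ x a ≠ 0 ∧ x b ≠ 0
  · obtain ⟨a, b, hab, hBab, hxa, hxb⟩ := hcase
    refine ⟨s(a, b), (G.mem_edgeSet).mpr hab, ?_⟩
    have hquad := hQuad a b hab hBab
    have hppos : 0 < p a * p b := mul_pos (abs_pos.mpr hxa) (abs_pos.mpr hxb)
    have hray := SpecTool.rayleigh_le (adjMatrix_herm (G.deleteEdges {s(a, b)})) p
    rw [grho_eq]
    have hlt2 : r * (p ⬝ᵥ p) < specRad ((G.deleteEdges {s(a, b)}).adjMatrix ℝ) * (p ⬝ᵥ p) := by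
      linarith
    exact (mul_lt_mul_iff_left₀ hN).mp hlt2
  · by_cases hzero : ∃ u, x u = 0
    · obtain ⟨u1, hu1⟩ := hzero
      obtain ⟨a1, ha1⟩ := Function.ne_iff.mp hx0
      obtain ⟨w⟩ := hG.preconnected u1 a1
      obtain ⟨u0, v0, hu0, hv0, hadj⟩ :=
        exists_boundary (S := {i : V | x i ≠ 0}) w (by simp [hu1]) ha1
      have hxu0 : x u0 = 0 := not_not.mp hu0
      have hpu0 : p u0 = 0 := by rw [hppt, hxu0, abs_zero]
      have hrow : ∑ j, B u0 j * p j = 0 := by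
        have h := congrFun hBp u0
        rw [SpecTool.mulVec_apply'] at h
        rw [h]
        simp [hpu0]
      have hv0x : x v0 ≠ 0 := hv0
      have hterm : B u0 v0 * p v0 ≠ 0 := by
        have hp0 : 0 < p v0 := abs_pos.mpr hv0x
        rcases hBedge u0 v0 hadj with h | h <;> rw [h] <;> nlinarith
      have hneg : ∃ j, B u0 j * p j < 0 := by
        by_contra h
        push_neg at h
        have hpos : 0 < ∑ j, B u0 j * p j :=
          Finset.sum_pos' (fun j _ => h j)
            ⟨v0, Finset.mem_univ v0, lt_of_le_of_ne (h v0) (Ne.symm hterm)⟩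
        linarith [hrow]
      have hpos : ∃ j, 0 < B u0 j * p j := by
        by_contra h
        push_neg at h
        obtain ⟨j0, hj0⟩ := hneg
        have hneg2 : ∑ j, B u0 j * p j < 0 := by
          have hss := Finset.sum_lt_sum (f := fun j => B u0 j * p j)
            (g := fun _ => (0 : ℝ)) (fun i _ => h i) ⟨j0, Finset.mem_univ j0, hj0⟩
          simpa using hss
        linarith [hrow]
      obtain ⟨j2, hj2⟩ := hneg
      obtain ⟨j1, hj1⟩ := hpos
      have hj2adj : G.Adj u0 j2 := by
        by_contra h
        rw [hBzero u0 j2 h] at hj2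
        simp at hj2
      have hpj2 : 0 < p j2 := by
        rcases lt_or_eq_of_le (hpnn j2) with h | h
        · exact h
        · rw [← h] at hj2; simp at hj2
      have hBj2 : B u0 j2 = -1 := by
        rcases hBedge u0 j2 hj2adj with h | h
        · rw [h] at hj2; nlinarith
        · exact h
      have hj1adj : G.Adj u0 j1 := by
        by_contra h
        rw [hBzero u0 j1 h] at hj1
        simp at hj1
      have hpj1 : 0 < p j1 := by
        rcases lt_or_eq_of_le (hpnn j1) with h | h
        · exact h
        · rw [← h] at hj1; simp at hj1
      have hne12 : j1 ≠ j2 := by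
        intro h
        rw [h] at hj1
        linarith
      have hu0j2 : u0 ≠ j2 := by
        intro h
        rw [← h] at hpj2
        rw [hpu0] at hpj2
        linarith
      refine ⟨s(u0, j2), (G.mem_edgeSet).mpr hj2adj, ?_⟩
      set A' : Matrix V V ℝ := (G.deleteEdges {s(u0, j2)}).adjMatrix ℝ with hA'
      have hA'H : A'.IsHermitian := adjMatrix_herm _
      have hA'sym : A'ᵀ = A' := SimpleGraph.transpose_adjMatrix _
      have hA'nn : ∀ a b, 0 ≤ A' a b := adjMatrix_nonneg _
      have hquad := hQuad u0 j2 hj2adj hBj2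
      rw [hpu0] at hquad
      have hquad2 : r * (p ⬝ᵥ p) ≤ p ⬝ᵥ (A' *ᵥ p) := by
        rw [hA']
        nlinarith [hquad]
      have hA'row : p j1 ≤ (A' *ᵥ p) u0 := by
        rw [SpecTool.mulVec_apply']
        have hA'j1 : A' u0 j1 = 1 := by
          have hsne : s(u0, j1) ∉ ({s(u0, j2)} : Set (Sym2 V)) := by
            simp only [Set.mem_singleton_iff]
            intro hEq
            rcases Sym2.eq_iff.mp hEq with ⟨-, h⟩ | ⟨h, -⟩
            · exact hne12 h
            · exact hu0j2 h
          simp [hA', SimpleGraph.deleteEdges_adj, hj1adj, hsne]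
        calc p j1 = A' u0 j1 * p j1 := by rw [hA'j1]; ring
          _ ≤ ∑ j, A' u0 j * p j :=
            Finset.single_le_sum (f := fun j => A' u0 j * p j)
              (fun j _ => mul_nonneg (hA'nn u0 j) (hpnn j)) (Finset.mem_univ j1)
      set t : ℝ := p j1 / (r + 1) with ht
      have ht0 : 0 < t := div_pos hpj1 (by linarith)
      have htr : t * (r + 1) = p j1 := div_mul_cancel₀ _ (by linarith)
      set δ : V → ℝ := Pi.single u0 1 with hδ
      set y : V → ℝ := p + t • δ with hy
      have hswap : p ⬝ᵥ (A' *ᵥ δ) = δ ⬝ᵥ (A' *ᵥ p) := by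
        rw [dotProduct_mulVec, ← mulVec_transpose, hA'sym, dotProduct_comm]
      have hδA'p : δ ⬝ᵥ (A' *ᵥ p) = (A' *ᵥ p) u0 := by
        rw [hδ, single_dotProduct, one_mul]
      have hA'δδ : δ ⬝ᵥ (A' *ᵥ δ) = 0 := by
        rw [hδ, mulVec_single, single_dotProduct]
        simp only [one_mul, mul_one]
        have : ¬ (G.deleteEdges {s(u0, j2)}).Adj u0 u0 := SimpleGraph.irrefl _
        simp [hA', this]
      have hyA'y : y ⬝ᵥ (A' *ᵥ y) = p ⬝ᵥ (A' *ᵥ p) + 2 * t * ((A' *ᵥ p) u0) := by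
        rw [hy, mulVec_add, mulVec_smul, add_dotProduct, dotProduct_add, dotProduct_add,
          smul_dotProduct, dotProduct_smul, dotProduct_smul, smul_dotProduct,
          smul_eq_mul, smul_eq_mul, smul_eq_mul, smul_eq_mul]
        rw [hswap, hδA'p, hA'δδ]
        ring
      have hδp : δ ⬝ᵥ p = 0 := by
        rw [hδ, single_dotProduct, one_mul, hpu0]
      have hpδ : p ⬝ᵥ δ = 0 := by
        rw [hδ, dotProduct_single, mul_one, hpu0]
      have hδδ : δ ⬝ᵥ δ = 1 := by
        rw [hδ, single_dotProduct, one_mul, Pi.single_eq_same]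
      have hyy : y ⬝ᵥ y = p ⬝ᵥ p + t ^ 2 := by
        rw [hy, add_dotProduct, dotProduct_add, dotProduct_add, smul_dotProduct,
          dotProduct_smul, dotProduct_smul, smul_dotProduct,
          smul_eq_mul, smul_eq_mul, smul_eq_mul, smul_eq_mul, hδp, hpδ, hδδ]
        ring
      have hray := SpecTool.rayleigh_le hA'H y
      rw [grho_eq, ← hA']
      have hyypos : 0 < y ⬝ᵥ y := by rw [hyy]; linarith [hN, sq_nonneg t]
      have hkey : 2 * t * p j1 > r * t ^ 2 := by nlinarith [htr, ht0, hr0, hpj1]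
      have h5 : 2 * t * p j1 ≤ 2 * t * ((A' *ᵥ p) u0) := by nlinarith [hA'row, ht0]
      have hlt2 : r * (y ⬝ᵥ y) < specRad A' * (y ⬝ᵥ y) := by
        have hc : r * (y ⬝ᵥ y) < y ⬝ᵥ (A' *ᵥ y) := by
          rw [hyy, hyA'y]
          linarith [hquad2, hkey, h5]
        linarith
      exact (mul_lt_mul_iff_left₀ hyypos).mp hlt2
    · push_neg at hzero
      exfalso
      have hBadj : B = G.adjMatrix ℝ := by
        funext a b
        by_cases h : G.Adj a b
        · rcases hBedge a b h with h1 | h1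
          · rw [h1]; simp [SimpleGraph.adjMatrix_apply, h]
          · exact absurd ⟨a, b, h, h1, hzero a, hzero b⟩ hcase
        · rw [hBzero a b h]; simp [SimpleGraph.adjMatrix_apply, h]
      have hppos : ∀ i, 0 < p i := fun i => abs_pos.mpr (hzero i)
      have hcol := SpecTool.specRad_le_of_pos_eigenvector (adjMatrix_herm G)
        (adjMatrix_nonneg G) hppos (hBadj ▸ hBp)
      rw [grho_eq] at hlt
      linarith

end MainStep

/-- Every signing of a connected graph `G` with spectral radius below `ρ(G)`
has spectral radius below `max_{e ∈ E} ρ(G−e)`; consequently, if the set of such signings is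
nonempty, its supremum `ρ_Γ(G)` is below `max_{e ∈ E} ρ(G−e)`. -/
theorem rhoGamma_lt_rhoE
    {V : Type*} [Fintype V] [DecidableEq V] (G : SimpleGraph V)
    (hG : G.Connected) :
    (∀ π : G.edgeSet → ℤˣ, specRad (signedAdj G π) < grho G →
      specRad (signedAdj G π) < sSup {r : ℝ | ∃ e ∈ G.edgeSet, r = grho (G.deleteEdges {e})}) ∧
    ((∃ π : G.edgeSet → ℤˣ, specRad (signedAdj G π) < grho G) →
      sSup {r : ℝ | ∃ π : G.edgeSet → ℤˣ,
          specRad (signedAdj G π) < grho G ∧ r = specRad (signedAdj G π)} <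
        sSup {r : ℝ | ∃ e ∈ G.edgeSet, r = grho (G.deleteEdges {e})}) := by
  classical
  have hbdd : BddAbove {r : ℝ | ∃ e ∈ G.edgeSet, r = grho (G.deleteEdges {e})} := by
    have heq : {r : ℝ | ∃ e ∈ G.edgeSet, r = grho (G.deleteEdges {e})}
        = (fun e => grho (G.deleteEdges {e})) '' G.edgeSet := by
      ext r
      constructor
      · rintro ⟨e, he, rfl⟩; exact ⟨e, he, rfl⟩
      · rintro ⟨e, he, rfl⟩; exact ⟨e, he, rfl⟩
    rw [heq]
    exact ((Set.toFinite G.edgeSet).image _).bddAbove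
  have part1 : ∀ π : G.edgeSet → ℤˣ, specRad (signedAdj G π) < grho G →
      specRad (signedAdj G π) <
        sSup {r : ℝ | ∃ e ∈ G.edgeSet, r = grho (G.deleteEdges {e})} := by
    intro π hlt
    obtain ⟨e, he, hlt2⟩ := main_step G hG π hlt
    exact lt_of_lt_of_le hlt2 (le_csSup hbdd ⟨e, he, rfl⟩)
  refine ⟨part1, ?_⟩
  rintro ⟨π0, hπ0⟩
  have hΓfin : {r : ℝ | ∃ π : G.edgeSet → ℤˣ,
      specRad (signedAdj G π) < grho G ∧ r = specRad (signedAdj G π)}.Finite := by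
    apply Set.Finite.subset
      (Set.finite_range (fun π : G.edgeSet → ℤˣ => specRad (signedAdj G π)))
    rintro r ⟨π, -, rfl⟩
    exact ⟨π, rfl⟩
  have hΓne : {r : ℝ | ∃ π : G.edgeSet → ℤˣ,
      specRad (signedAdj G π) < grho G ∧ r = specRad (signedAdj G π)}.Nonempty :=
    ⟨_, ⟨π0, hπ0, rfl⟩⟩
  obtain ⟨π1, hπ1, heq⟩ := hΓne.csSup_mem hΓfin
  rw [heq]
  exact part1 π1 hπ1
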